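/- For all complex numbers x₁, x₂, x₃, x₄, y₁, y₂, y₃, y₄, the 8×6 complex matrix M₂₄ with rows (1,0,1,0,0,−1), (0,1,0,1,−1,0), (x₂,x₁,x₂,x₁,x₁,x₂), (x₄,x₃,x₄,x₃,x₃,x₄), (0,0,1,0,0,1), (0,0,0,1,1,0), (0,0,y₁,y₂,−y₂,−y₁), (0,0,y₃,y₄,−y₄,−y₃) has rank at most 5 if and only if the 4×2 matrix A₁(x,y) has rank at most 1. -/
import Mathlib


open Matrix

/-- The 4×2 matrix `A₁(x,y)` with rows `(x₁,x₂), (x₃,x₄), (y₂,y₁), (y₄,y₃)`. -/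
def A1 (x₁ x₂ x₃ x₄ y₁ y₂ y₃ y₄ : ℂ) : Matrix (Fin 4) (Fin 2) ℂ :=
  !![x₁, x₂; x₃, x₄; y₂, y₁; y₄, y₃]

/-- The Wyser–Yong matrix `M₂₄` restricted to the normal slice. -/
def M24 (x₁ x₂ x₃ x₄ y₁ y₂ y₃ y₄ : ℂ) : Matrix (Fin 8) (Fin 6) ℂ :=
  !![1, 0, 1, 0, 0, -1;
     0, 1, 0, 1, -1, 0;
     x₂, x₁, x₂, x₁, x₁, x₂;
     x₄, x₃, x₄, x₃, x₃, x₄;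
     0, 0, 1, 0, 0, 1;
     0, 0, 0, 1, 1, 0;
     0, 0, y₁, y₂, -y₂, -y₁;
     0, 0, y₃, y₄, -y₄, -y₃]

open Module

section EvalLemmas

variable {α : Type*}

lemma cv2_0 (a b : α) : ![a, b] 0 = a := rfl
lemma cv2_1 (a b : α) : ![a, b] 1 = b := rfl

lemma cv4_0 (a b c d : α) : ![a, b, c, d] 0 = a := rfl
lemma cv4_1 (a b c d : α) : ![a, b, c, d] 1 = b := rfl
lemma cv4_2 (a b c d : α) : ![a, b, c, d] 2 = c := rfl
lemma cv4_3 (a b c d : α) : ![a, b, c, d] 3 = d := rfl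

lemma cv6_0 (a b c d e f : α) : ![a, b, c, d, e, f] 0 = a := rfl
lemma cv6_1 (a b c d e f : α) : ![a, b, c, d, e, f] 1 = b := rfl
lemma cv6_2 (a b c d e f : α) : ![a, b, c, d, e, f] 2 = c := rfl
lemma cv6_3 (a b c d e f : α) : ![a, b, c, d, e, f] 3 = d := rfl
lemma cv6_4 (a b c d e f : α) : ![a, b, c, d, e, f] 4 = e := rfl
lemma cv6_5 (a b c d e f : α) : ![a, b, c, d, e, f] 5 = f := rfl

lemma cv8_0 (a b c d e f g h : α) : ![a, b, c, d, e, f, g, h] 0 = a := rfl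
lemma cv8_1 (a b c d e f g h : α) : ![a, b, c, d, e, f, g, h] 1 = b := rfl
lemma cv8_2 (a b c d e f g h : α) : ![a, b, c, d, e, f, g, h] 2 = c := rfl
lemma cv8_3 (a b c d e f g h : α) : ![a, b, c, d, e, f, g, h] 3 = d := rfl
lemma cv8_4 (a b c d e f g h : α) : ![a, b, c, d, e, f, g, h] 4 = e := rfl
lemma cv8_5 (a b c d e f g h : α) : ![a, b, c, d, e, f, g, h] 5 = f := rfl
lemma cv8_6 (a b c d e f g h : α) : ![a, b, c, d, e, f, g, h] 6 = g := rfl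
lemma cv8_7 (a b c d e f g h : α) : ![a, b, c, d, e, f, g, h] 7 = h := rfl

lemma eta2 (u : Fin 2 → α) : u = ![u 0, u 1] := by
  funext i; rcases i with ⟨i, hi⟩; interval_cases i <;> rfl

lemma eta4 (u : Fin 4 → α) : u = ![u 0, u 1, u 2, u 3] := by
  funext i; rcases i with ⟨i, hi⟩; interval_cases i <;> rfl

lemma eta6 (u : Fin 6 → α) : u = ![u 0, u 1, u 2, u 3, u 4, u 5] := by
  funext i; rcases i with ⟨i, hi⟩; interval_cases i <;> rfl

lemma eta8 (u : Fin 8 → α) : u = ![u 0, u 1, u 2, u 3, u 4, u 5, u 6, u 7] := by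
  funext i; rcases i with ⟨i, hi⟩; interval_cases i <;> rfl

lemma empty_eq_zero : (![] : Fin 0 → ℂ) = 0 := by
  funext i; exact i.elim0

end EvalLemmas

/-- For a matrix with `n` columns over `ℂ`, having rank at most `n - 1` is the same as
having a nontrivial kernel. -/
lemma rank_le_iff_exists_ker {m n : ℕ} (B : Matrix (Fin m) (Fin n) ℂ) (hn : 0 < n) :
    B.rank ≤ n - 1 ↔ ∃ v, B.mulVec v = 0 ∧ v ≠ 0 := by
  have h := LinearMap.finrank_range_add_finrank_ker B.mulVecLin
  have hd : finrank ℂ (Fin n → ℂ) = n := by simp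
  rw [hd] at h
  set a := finrank ℂ (LinearMap.range B.mulVecLin) with ha
  set b := finrank ℂ (LinearMap.ker B.mulVecLin) with hb
  have key : B.rank ≤ n - 1 ↔ 0 < b := by
    show a ≤ n - 1 ↔ 0 < b
    omega
  rw [key, hb, Module.finrank_pos_iff_exists_ne_zero]
  constructor
  · rintro ⟨⟨v, hv⟩, hne⟩
    refine ⟨v, by simpa [Matrix.mulVecLin_apply] using hv, ?_⟩
    intro h0
    exact hne (by simp [Submodule.mk_eq_zero, h0])
  · rintro ⟨v, h1, h2⟩
    exact ⟨⟨v, by simpa [LinearMap.mem_ker, Matrix.mulVecLin_apply] using h1⟩, by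
      simpa [Submodule.mk_eq_zero] using h2⟩

theorem stmt9 (x₁ x₂ x₃ x₄ y₁ y₂ y₃ y₄ : ℂ) :
    (M24 x₁ x₂ x₃ x₄ y₁ y₂ y₃ y₄).rank ≤ 5 ↔
      (A1 x₁ x₂ x₃ x₄ y₁ y₂ y₃ y₄).rank ≤ 1 := by
  have hM := rank_le_iff_exists_ker (M24 x₁ x₂ x₃ x₄ y₁ y₂ y₃ y₄) (by norm_num)
  have hA := rank_le_iff_exists_ker (A1 x₁ x₂ x₃ x₄ y₁ y₂ y₃ y₄) (by norm_num)
  norm_num at hM hA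
  rw [hM, hA]
  constructor
  · rintro ⟨v, hv, hv0⟩
    -- extract the eight scalar equations
    have e0 := congrFun hv 0
    have e1 := congrFun hv 1
    have e2 := congrFun hv 2
    have e3 := congrFun hv 3
    have e4 := congrFun hv 4
    have e5 := congrFun hv 5
    have e6 := congrFun hv 6
    have e7 := congrFun hv 7
    simp only [M24, Matrix.mulVec, dotProduct, Fin.sum_univ_six, Matrix.of_apply,
      cv8_0, cv8_1, cv8_2, cv8_3, cv8_4, cv8_5, cv8_6, cv8_7,
      cv6_0, cv6_1, cv6_2, cv6_3, cv6_4, cv6_5, Pi.zero_apply] at e0 e1 e2 e3 e4 e5 e6 e7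
    refine ⟨![v 4, v 5], ?_, ?_⟩
    · rw [eta4 (A1 x₁ x₂ x₃ x₄ y₁ y₂ y₃ y₄ *ᵥ ![v 4, v 5])]
      simp only [A1, Matrix.mulVec, dotProduct, Fin.sum_univ_two, Matrix.of_apply,
        cv4_0, cv4_1, cv4_2, cv4_3, cv2_0, cv2_1, Matrix.cons_eq_zero_iff]
      refine ⟨?_, ?_, ?_, ?_, empty_eq_zero⟩
      · linear_combination (e2 - x₂ * e0 - x₁ * e1) / 2
      · linear_combination (e3 - x₄ * e0 - x₃ * e1) / 2
      · linear_combination (-(e6 - y₁ * e4 - y₂ * e5)) / 2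
      · linear_combination (-(e7 - y₃ * e4 - y₄ * e5)) / 2
    · intro hw
      have h4 := congrFun hw 0
      have h5 := congrFun hw 1
      simp only [cv2_0, cv2_1, Pi.zero_apply] at h4 h5
      apply hv0
      rw [eta6 v]
      simp only [Matrix.cons_eq_zero_iff]
      refine ⟨?_, ?_, ?_, ?_, ?_, ?_, empty_eq_zero⟩
      · linear_combination e0 - e4 + 2 * h5
      · linear_combination e1 - e5 + 2 * h4
      · linear_combination e4 - h5
      · linear_combination e5 - h4
      · exact h4
      · exact h5
  · rintro ⟨w, hw, hw0⟩
    have f0 := congrFun hw 0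
    have f1 := congrFun hw 1
    have f2 := congrFun hw 2
    have f3 := congrFun hw 3
    simp only [A1, Matrix.mulVec, dotProduct, Fin.sum_univ_two, Matrix.of_apply,
      cv4_0, cv4_1, cv4_2, cv4_3, cv2_0, cv2_1, Pi.zero_apply] at f0 f1 f2 f3
    refine ⟨![2 * w 1, 2 * w 0, -(w 1), -(w 0), w 0, w 1], ?_, ?_⟩
    · rw [eta8 (M24 x₁ x₂ x₃ x₄ y₁ y₂ y₃ y₄ *ᵥ ![2 * w 1, 2 * w 0, -(w 1), -(w 0), w 0, w 1])]
      simp only [M24, Matrix.mulVec, dotProduct, Fin.sum_univ_six, Matrix.of_apply,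
        cv8_0, cv8_1, cv8_2, cv8_3, cv8_4, cv8_5, cv8_6, cv8_7,
        cv6_0, cv6_1, cv6_2, cv6_3, cv6_4, cv6_5, Matrix.cons_eq_zero_iff]
      refine ⟨?_, ?_, ?_, ?_, ?_, ?_, ?_, ?_, empty_eq_zero⟩
      · ring
      · ring
      · linear_combination 2 * f0
      · linear_combination 2 * f1
      · ring
      · ring
      · linear_combination (-2 : ℂ) * f2
      · linear_combination (-2 : ℂ) * f3
    · intro hv
      have h0 := congrFun hv 4
      have h1 := congrFun hv 5
      simp only [cv6_4, cv6_5, Pi.zero_apply] at h0 h1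
      apply hw0
      rw [eta2 w]
      simp only [Matrix.cons_eq_zero_iff]
      exact ⟨h0, h1, empty_eq_zero⟩
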